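/- Let D be a real graded division algebra with degree-preserving involution φ_0 restricting to the conjugation on D_e, and define η : T → {±1} by φ_0(X_t) = η(t) X_t (with the normalizations of the paper). Then for all s, t ∈ T one has η(s t²) = η(s). -/

import Mathlib

variable {G : Type*} [CommGroup G] [DecidableEq G] {D : Type*} [Ring D] [Algebra ℝ D]

/-- A real graded division algebra. -/
def IsGDA (comp : G → Submodule ℝ D) : Prop :=
  DirectSum.IsInternal comp ∧ (1 : D) ∈ comp 1 ∧
    (∀ (g h : G) (a b : D), a ∈ comp g → b ∈ comp h → a * b ∈ comp (g * h)) ∧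
    ∀ (g : G) (a : D), a ∈ comp g → a ≠ 0 → IsUnit a

/-- Inverse of a homogeneous unit is homogeneous. -/
lemma aux_inv_mem (comp : G → Submodule ℝ D) (hint : DirectSum.IsInternal comp)
    (h1 : (1 : D) ∈ comp 1)
    (hmul : ∀ (g h : G) (a b : D), a ∈ comp g → b ∈ comp h → a * b ∈ comp (g * h))
    (g : G) (u : Dˣ) (hu : (u : D) ∈ comp g) :
    ((u⁻¹ : Dˣ) : D) ∈ comp g⁻¹ := by
  classical
  set F := DirectSum.coeAddMonoidHom comp with hF
  obtain ⟨x, hx⟩ := hint.surjective ((u⁻¹ : Dˣ) : D)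
  set y : DirectSum G (fun i => ↥(comp i)) := ∑ k ∈ DFinsupp.support x,
      DirectSum.of (fun i => ↥(comp i)) (k * g)
        ⟨(x k : D) * (u : D), hmul k g _ _ (x k).2 hu⟩ with hy
  have hFy : F y = 1 := by
    rw [hy, map_sum]
    have : ∀ k ∈ DFinsupp.support x,
        F (DirectSum.of (fun i => ↥(comp i)) (k * g)
          ⟨(x k : D) * (u : D), hmul k g _ _ (x k).2 hu⟩) = (x k : D) * (u : D) := by
      intro k _; rw [hF, DirectSum.coeAddMonoidHom_of]
    rw [Finset.sum_congr rfl this, ← Finset.sum_mul]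
    have hxsum : ∑ k ∈ DFinsupp.support x, (x k : D) = (u⁻¹ : Dˣ) := by
      conv_rhs => rw [← hx, ← hF, ← DirectSum.sum_support_of x, map_sum]
      apply Finset.sum_congr rfl
      intro k _
      rw [hF, DirectSum.coeAddMonoidHom_of]
    rw [hxsum, Units.inv_mul]
  have hone : F (DirectSum.of (fun i => ↥(comp i)) (1 : G) ⟨1, h1⟩) = 1 := by
    rw [hF, DirectSum.coeAddMonoidHom_of]
  have hyone : y = DirectSum.of (fun i => ↥(comp i)) (1 : G) ⟨1, h1⟩ :=
    hint.injective (by rw [hFy, hone])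
  have hxk : ∀ k, k ≠ g⁻¹ → x k = 0 := by
    intro k hk
    by_contra hk0
    have hks : k ∈ DFinsupp.support x := DFinsupp.mem_support_iff.mpr hk0
    have h1' : y (k * g) = DirectSum.of (fun i => ↥(comp i)) (1 : G) ⟨1, h1⟩ (k * g) := by
      rw [hyone]
    have hkg : k * g ≠ 1 := by
      intro h; exact hk (eq_inv_of_mul_eq_one_left h)
    have hr : DirectSum.of (fun i => ↥(comp i)) (1 : G) ⟨1, h1⟩ (k * g) = 0 :=
      DirectSum.of_eq_of_ne _ _ _ hkg
    have hl : (y (k * g) : D) = (x k : D) * (u : D) := by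
      rw [hy, DFinsupp.finset_sum_apply]
      rw [Finset.sum_eq_single k]
      · rw [DirectSum.of_eq_same]
      · intro b _ hb
        exact DirectSum.of_eq_of_ne _ _ _ (by simpa using Ne.symm hb)
      · intro h; exact absurd hks h
    rw [h1', hr] at hl
    have : (x k : D) = 0 := by
      have h0 : (x k : D) * (u : D) = 0 := by rw [← hl]; rfl
      have := congrArg (· * ((u⁻¹ : Dˣ) : D)) h0
      simpa [mul_assoc] using this
    exact hk0 (Subtype.ext this)
  have : ((u⁻¹ : Dˣ) : D) = ∑ k ∈ DFinsupp.support x, (x k : D) := by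
    conv_lhs => rw [← hx, ← hF, ← DirectSum.sum_support_of x, map_sum]
    apply Finset.sum_congr rfl
    intro k _
    rw [hF, DirectSum.coeAddMonoidHom_of]
  rw [this]
  apply Submodule.sum_mem
  intro k hk
  by_cases hkg : k = g⁻¹
  · subst hkg; exact (x g⁻¹).2
  · rw [hxk k hkg]; simp

theorem stmt_5 (comp : G → Submodule ℝ D) (hgda : IsGDA comp)
    (hfd : FiniteDimensional ℝ ↥(comp (1 : G)))
    (T : Subgroup G) (hT : ∀ g : G, comp g ≠ ⊥ ↔ g ∈ T)
    (X : ↥T → Dˣ) (hX : ∀ t : ↥T, (X t : D) ∈ comp (t : G))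
    (φ : D ≃ₗ[ℝ] D)
    (hanti : ∀ x y : D, φ (x * y) = φ y * φ x)
    (hinvol : ∀ x : D, φ (φ x) = x)
    (hgr : ∀ (g : G), ∀ x ∈ comp g, φ x ∈ comp g)
    -- `φ` restricts to the conjugation on `D_e`: real trace and nonnegative real norm
    (hconj : ∀ z ∈ comp (1 : G),
      (∃ r : ℝ, z + φ z = algebraMap ℝ D r) ∧ ∃ r : ℝ, 0 ≤ r ∧ z * φ z = algebraMap ℝ D r)
    (η : ↥T → ℝ) (hη : ∀ t : ↥T, η t = 1 ∨ η t = -1)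
    (hφX : ∀ t : ↥T, φ (X t : D) = η t • (X t : D))
    -- the normalizations: `D_e = ℝ`, or `D_e` noncommutative (≅ ℍ) with the `X_t`
    -- centralizing `D_e`, or `D_e` commutative (≅ ℂ) with `η = δ` on `K`
    (hcase :
      (∀ z ∈ comp (1 : G), ∃ r : ℝ, z = algebraMap ℝ D r) ∨
      ((∀ (t : ↥T), ∀ z ∈ comp (1 : G), (X t : D) * z = z * (X t : D)) ∧
        ¬(∀ z ∈ comp (1 : G), ∀ w ∈ comp (1 : G), z * w = w * z)) ∨
      ((∀ z ∈ comp (1 : G), ∀ w ∈ comp (1 : G), z * w = w * z) ∧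
        ∃ δ : ℝ, (δ = 1 ∨ δ = -1) ∧
          ∀ t : ↥T, (∀ z ∈ comp (1 : G), (X t : D) * z = z * (X t : D)) → η t = δ)) :
    ∀ s t : ↥T, η (s * t * t) = η s := by
  classical
  obtain ⟨hint, h1mem, hmul, hunit⟩ := hgda
  intro s t
  -- notation
  -- nontriviality of D
  have hne : comp (1 : G) ≠ ⊥ := (hT 1).mpr T.one_mem
  obtain ⟨x0, hx0m, hx0⟩ := (Submodule.ne_bot_iff _).mp hne
  have hntr : Nontrivial D := ⟨⟨x0, 0, hx0⟩⟩
  -- φ fixes 1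
  have hφ1 : φ (1 : D) = 1 := by
    have h : φ (1 : D) = φ 1 * φ 1 := by
      have := hanti 1 1; rwa [one_mul] at this
    have hm : φ (1 : D) ∈ comp 1 := hgr 1 1 h1mem
    have hn0 : φ (1 : D) ≠ 0 := fun h0 => one_ne_zero (by rw [← hinvol 1, h0, map_zero])
    obtain ⟨v, hv⟩ := hunit 1 _ hm hn0
    have h2 : (v : D) = (v : D) * (v : D) := by rw [hv]; exact h
    have h3 := congrArg (fun x => ((v⁻¹ : Dˣ) : D) * x) h2
    simp only [← mul_assoc, Units.inv_mul, one_mul] at h3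
    rw [← hv, ← h3]
  have hsmul1 : ∀ r : ℝ, φ (r • (1 : D)) = r • (1 : D) := fun r => by
    rw [map_smul, hφ1]
  have halg : ∀ r : ℝ, algebraMap ℝ D r = r • (1 : D) := fun r =>
    Algebra.algebraMap_eq_smul_one r
  have hsmul_one_inj : ∀ a b : ℝ, a • (1 : D) = b • (1 : D) → a = b := by
    intro a b hab
    by_contra hne'
    have h0 : (a - b) • (1 : D) = 0 := by rw [sub_smul, hab, sub_self]
    have h1 : (1 : D) = 0 := by
      calc (1 : D) = (a - b)⁻¹ • ((a - b) • (1 : D)) := by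
            rw [smul_smul, inv_mul_cancel₀ (sub_ne_zero.mpr hne'), one_smul]
        _ = 0 := by rw [h0, smul_zero]
    exact one_ne_zero h1
  have hsmul_cancel : ∀ (r : ℝ), r ≠ 0 → ∀ x y : D, r • x = r • y → x = y := by
    intro r hr x y hxy
    have := congrArg (fun z => r⁻¹ • z) hxy
    simpa [smul_smul, inv_mul_cancel₀ hr] using this
  have hinv : ∀ (g : G) (u : Dˣ), (u : D) ∈ comp g → ((u⁻¹ : Dˣ) : D) ∈ comp g⁻¹ :=
    fun g u hu => aux_inv_mem comp hint h1mem hmul g u hu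
  have hrecast : ∀ (g g' : G) (a : D), a ∈ comp g → g = g' → a ∈ comp g' :=
    fun g g' a h hg => hg ▸ h
  set Xs := X s with hXsdef
  set Xt := X t with hXtdef
  set W := X (s * t * t) with hWdef
  have hXs : (Xs : D) ∈ comp ((s : ↥T) : G) := hX s
  have hXt : (Xt : D) ∈ comp ((t : ↥T) : G) := hX t
  have hW : (W : D) ∈ comp (((s : ↥T) : G) * t * t) := by
    have := hX (s * t * t); simpa using this
  have hφXs : φ (Xs : D) = η s • (Xs : D) := hφX s
  have hφXt : φ (Xt : D) = η t • (Xt : D) := hφX t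
  have hφW : φ (W : D) = η (s * t * t) • (W : D) := hφX (s * t * t)
  have hηt2 : η t * η t = 1 := by rcases hη t with h | h <;> rw [h] <;> norm_num
  have hηs0 : η s ≠ 0 := by rcases hη s with h | h <;> rw [h] <;> norm_num
  have hηt0 : η t ≠ 0 := by rcases hη t with h | h <;> rw [h] <;> norm_num
  have hXsXt : ((Xs * Xt : Dˣ) : D) ∈ comp (((s : ↥T) : G) * t) := by
    rw [Units.val_mul]; exact hmul _ _ _ _ hXs hXt
  -- β = commutation factor of Xt, Xs
  set β : Dˣ := Xt * Xs * (Xs * Xt)⁻¹ with hβdef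
  have hβval : (β : D) * ((Xs * Xt : Dˣ) : D) = (Xt : D) * (Xs : D) := by
    have h := congrArg (Units.val)
      (show β * (Xs * Xt) = Xt * Xs from by rw [hβdef]; exact inv_mul_cancel_right _ _)
    rw [Units.val_mul, Units.val_mul] at h
    exact h
  have hβsplit : (β : D) = (Xt : D) * (Xs : D) * (((Xs * Xt)⁻¹ : Dˣ) : D) := by
    rw [hβdef]; simp [Units.val_mul]
  have hβm : (β : D) ∈ comp (1 : G) := by
    have h1 : (((Xs * Xt)⁻¹ : Dˣ) : D) ∈ comp ((((s : ↥T) : G) * t)⁻¹) := hinv _ _ hXsXt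
    have h2 : (β : D) ∈ comp (((t : ↥T) : G) * s * ((((s : ↥T) : G) * t)⁻¹)) := by
      rw [hβsplit]
      exact hmul _ _ _ _ (hmul _ _ _ _ hXt hXs) h1
    exact hrecast _ _ _ h2 (by rw [mul_inv_eq_one]; exact mul_comm _ _)
  have hR0 : (Xt : D) * (Xs : D) = (β : D) * ((Xs : D) * (Xt : D)) := by
    rw [← hβval]
    congr 1
  -- z = X_s X_t X_t X_{stt}^{-1}
  set z : Dˣ := Xs * (Xt * Xt) * W⁻¹ with hzdef
  have hzsplit : (z : D) = (Xs : D) * ((Xt : D) * (Xt : D)) * ((W⁻¹ : Dˣ) : D) := by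
    rw [hzdef]; simp [Units.val_mul]
  have hzm : (z : D) ∈ comp (1 : G) := by
    have h1 : ((W⁻¹ : Dˣ) : D) ∈ comp ((((s : ↥T) : G) * t * t)⁻¹) := hinv _ _ hW
    have h2 : (z : D) ∈ comp
        ((((s : ↥T) : G) * (((t : ↥T) : G) * t)) * ((((s : ↥T) : G) * t * t)⁻¹)) := by
      rw [hzsplit]
      exact hmul _ _ _ _ (hmul _ _ _ _ hXs (hmul _ _ _ _ hXt hXt)) h1
    exact hrecast _ _ _ h2 (by rw [mul_inv_eq_one]; exact (mul_assoc _ _ _).symm)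
  have hzW : (z : D) * (W : D) = (Xs : D) * ((Xt : D) * (Xt : D)) := by
    have h := congrArg (Units.val)
      (show z * W = Xs * (Xt * Xt) from by rw [hzdef]; exact inv_mul_cancel_right _ _)
    rw [Units.val_mul, Units.val_mul, Units.val_mul] at h
    exact h
  -- the main chain for cases 1 and 2
  have main12 : (∀ (u : ↥T), ∀ d ∈ comp (1 : G), (X u : D) * d = d * (X u : D)) →
      (∀ c ∈ comp (1 : G), (∀ d ∈ comp (1 : G), c * d = d * c) → φ c = -c → c = 0) →
      η (s * t * t) = η s := by
    intro hC hP
    have hCinv : ∀ (v : Dˣ), (∀ d ∈ comp (1 : G), (v : D) * d = d * (v : D)) →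
        ∀ d ∈ comp (1 : G), ((v⁻¹ : Dˣ) : D) * d = d * ((v⁻¹ : Dˣ) : D) := by
      intro v hv d hd
      have h : Commute ((v : D)) d := hv d hd
      exact h.units_inv_left
    have hβC : ∀ d ∈ comp (1 : G), (β : D) * d = d * (β : D) := by
      intro d hd
      have c1 : Commute ((Xt : D)) d := hC t d hd
      have c2 : Commute ((Xs : D)) d := hC s d hd
      have c3 : Commute (((Xs * Xt : Dˣ) : D)) d := by
        rw [Units.val_mul]; exact c2.mul_left c1
      have c4 : Commute ((((Xs * Xt)⁻¹ : Dˣ) : D)) d := c3.units_inv_left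
      have : Commute ((β : D)) d := by
        rw [hβsplit]; exact (c1.mul_left c2).mul_left c4
      exact this
    -- φ β * β = 1
    have hS1 : φ (β : D) * (β : D) = 1 := by
      have hφβm : φ (β : D) ∈ comp 1 := hgr 1 _ hβm
      have lhs : φ ((Xt : D) * (Xs : D)) = (η s * η t) • ((Xs : D) * (Xt : D)) := by
        rw [hanti, hφXs, hφXt, smul_mul_smul_comm]
      have rhs : φ ((β : D) * ((Xs * Xt : Dˣ) : D)) =
          (η t * η s) • ((φ (β : D) * (β : D)) * ((Xs : D) * (Xt : D))) := by
        rw [hanti, Units.val_mul, hanti, hφXs, hφXt, smul_mul_smul_comm, smul_mul_assoc]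
        congr 1
        -- (Xt*Xs)*φβ = (φβ*β)*(Xs*Xt)
        have c1 : (Xs : D) * φ (β : D) = φ (β : D) * (Xs : D) := hC s _ hφβm
        have c2 : (Xt : D) * φ (β : D) = φ (β : D) * (Xt : D) := hC t _ hφβm
        calc (Xt : D) * (Xs : D) * φ (β : D)
            = (Xt : D) * ((Xs : D) * φ (β : D)) := mul_assoc _ _ _
          _ = (Xt : D) * (φ (β : D) * (Xs : D)) := by rw [c1]
          _ = ((Xt : D) * φ (β : D)) * (Xs : D) := (mul_assoc _ _ _).symm
          _ = (φ (β : D) * (Xt : D)) * (Xs : D) := by rw [c2]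
          _ = φ (β : D) * ((Xt : D) * (Xs : D)) := mul_assoc _ _ _
          _ = φ (β : D) * ((β : D) * ((Xs : D) * (Xt : D))) := by rw [hR0]
          _ = (φ (β : D) * (β : D)) * ((Xs : D) * (Xt : D)) := (mul_assoc _ _ _).symm
      have heq : (η s * η t) • ((Xs : D) * (Xt : D)) =
          (η t * η s) • ((φ (β : D) * (β : D)) * ((Xs : D) * (Xt : D))) := by
        rw [← lhs, ← rhs, hβval]
      rw [mul_comm (η t) (η s)] at heq
      have heq2 : ((Xs : D) * (Xt : D)) = (φ (β : D) * (β : D)) * ((Xs : D) * (Xt : D)) :=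
        hsmul_cancel _ (mul_ne_zero hηs0 hηt0) _ _ heq
      have h3 := congrArg (fun x => x * (((Xs * Xt)⁻¹ : Dˣ) : D)) heq2
      simp only [← Units.val_mul] at h3
      simpa [mul_assoc, Units.mul_inv_cancel_right, Units.mul_inv] using h3.symm
    have hφβinv : φ (β : D) = ((β⁻¹ : Dˣ) : D) := by
      have h := congrArg (fun x => x * ((β⁻¹ : Dˣ) : D)) hS1
      simpa [Units.mul_inv_cancel_right] using h
    have hφβC : ∀ d ∈ comp (1 : G), φ (β : D) * d = d * φ (β : D) := by
      intro d hd; rw [hφβinv]; exact hCinv β hβC d hd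
    have hS2 : φ (β : D) = (β : D) := by
      have hγm : (β : D) - φ (β : D) ∈ comp (1 : G) :=
        Submodule.sub_mem _ hβm (hgr 1 _ hβm)
      have hγc : ∀ d ∈ comp (1 : G),
          ((β : D) - φ (β : D)) * d = d * ((β : D) - φ (β : D)) := by
        intro d hd; rw [sub_mul, mul_sub, hβC d hd, hφβC d hd]
      have hγφ : φ ((β : D) - φ (β : D)) = -((β : D) - φ (β : D)) := by
        rw [map_sub, hinvol, neg_sub]
      have h0 := hP _ hγm hγc hγφ
      exact (sub_eq_zero.mp h0).symm
    have hββ : (β : D) * (β : D) = 1 := by nth_rewrite 1 [← hS2]; exact hS1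
    -- Xt Xt Xs = Xs Xt Xt
    have hS3 : (Xt : D) * ((Xt : D) * (Xs : D)) = (Xs : D) * ((Xt : D) * (Xt : D)) := by
      have cβ : (Xt : D) * (β : D) = (β : D) * (Xt : D) := hC t _ hβm
      calc (Xt : D) * ((Xt : D) * (Xs : D))
          = (Xt : D) * ((β : D) * ((Xs : D) * (Xt : D))) := by rw [hR0]
        _ = ((Xt : D) * (β : D)) * ((Xs : D) * (Xt : D)) := (mul_assoc _ _ _).symm
        _ = ((β : D) * (Xt : D)) * ((Xs : D) * (Xt : D)) := by rw [cβ]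
        _ = (β : D) * ((Xt : D) * ((Xs : D) * (Xt : D))) := mul_assoc _ _ _
        _ = (β : D) * (((Xt : D) * (Xs : D)) * (Xt : D)) := by rw [mul_assoc]
        _ = (β : D) * (((β : D) * ((Xs : D) * (Xt : D))) * (Xt : D)) := by rw [hR0]
        _ = (β : D) * ((β : D) * (((Xs : D) * (Xt : D)) * (Xt : D))) := by rw [mul_assoc]
        _ = ((β : D) * (β : D)) * (((Xs : D) * (Xt : D)) * (Xt : D)) := (mul_assoc _ _ _).symm
        _ = ((Xs : D) * (Xt : D)) * (Xt : D) := by rw [hββ, one_mul]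
        _ = (Xs : D) * ((Xt : D) * (Xt : D)) := mul_assoc _ _ _
    -- φ (Xs Xt Xt) = η s • (Xs Xt Xt)
    have hS4 : φ ((Xs : D) * ((Xt : D) * (Xt : D))) =
        η s • ((Xs : D) * ((Xt : D) * (Xt : D))) := by
      rw [hanti, hanti, hφXs, hφXt, smul_mul_smul_comm, smul_mul_smul_comm, hηt2, one_mul]
      congr 1
      rw [mul_assoc]
      exact hS3
    -- main computation
    have hzC : ∀ d ∈ comp (1 : G), (z : D) * d = d * (z : D) := by
      intro d hd
      have c1 : Commute ((Xt : D)) d := hC t d hd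
      have c2 : Commute ((Xs : D)) d := hC s d hd
      have c3 : Commute ((W : D)) d := hC (s * t * t) d hd
      have c4 : Commute (((W⁻¹ : Dˣ) : D)) d := c3.units_inv_left
      have : Commute ((z : D)) d := by
        rw [hzsplit]; exact (c2.mul_left (c1.mul_left c1)).mul_left c4
      exact this
    have hφzm : φ (z : D) ∈ comp (1 : G) := hgr 1 _ hzm
    have e1 : φ ((z : D) * (W : D)) = η s • ((z : D) * (W : D)) := by
      rw [hzW]; exact hS4
    have e2 : φ ((z : D) * (W : D)) = η (s * t * t) • (φ (z : D) * (W : D)) := by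
      rw [hanti, hφW, smul_mul_assoc]
      congr 1
      exact hC (s * t * t) _ hφzm
    have hkey : η s • (z : D) = η (s * t * t) • φ (z : D) := by
      have h := e1.symm.trans e2
      have h2 := congrArg (fun x => x * ((W⁻¹ : Dˣ) : D)) h
      simp only [smul_mul_assoc] at h2
      rw [Units.mul_inv_cancel_right, Units.mul_inv_cancel_right] at h2
      exact h2
    have hzn0 : (z : D) ≠ 0 := Units.ne_zero z
    rcases hη s with hs1 | hs1 <;> rcases hη (s * t * t) with he1 | he1 <;>
      rw [hs1, he1] <;> rw [hs1, he1] at hkey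
    · exfalso
      rw [one_smul, neg_one_smul] at hkey
      have h' := congrArg Neg.neg hkey
      rw [neg_neg] at h'
      exact hzn0 (hP _ hzm hzC h'.symm)
    · exfalso
      rw [neg_one_smul, one_smul] at hkey
      exact hzn0 (hP _ hzm hzC hkey.symm)
  -- now the case analysis
  rcases hcase with hcase1 | ⟨hc2C, hc2nc⟩ | ⟨hcomm, δ, hδpm, hδ⟩
  · -- D_e = ℝ
    apply main12
    · intro u d hd
      obtain ⟨r, hr⟩ := hcase1 d hd
      rw [hr, halg, mul_smul_comm, smul_mul_assoc, mul_one, one_mul]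
    · intro c hc _ hφc
      obtain ⟨r, hr⟩ := hcase1 c hc
      rw [hr, halg] at hφc ⊢
      rw [hsmul1] at hφc
      have h1 : r • (1 : D) = (-r) • (1 : D) := by rw [neg_smul]; exact hφc
      have h2 : r = -r := hsmul_one_inj _ _ h1
      have h3 : r = 0 := by linarith
      rw [h3, zero_smul]
  · -- D_e = ℍ (noncommutative, X's centralize)
    apply main12 hc2C
    intro c hc hcC hφc
    by_contra hc0
    apply hc2nc
    -- build a central square root of -1
    obtain ⟨u, hu⟩ := hunit 1 c hc hc0
    obtain ⟨_, r, hr0, hrc⟩ := hconj c hc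
    rw [hφc, halg] at hrc
    have hcc : c * c = (-r) • (1 : D) := by
      rw [neg_smul, ← hrc, mul_neg, neg_neg]
    have hrne : r ≠ 0 := by
      intro h0
      have hcz : ((u * u : Dˣ) : D) = 0 := by
        rw [Units.val_mul, hu, hcc, h0, neg_zero, zero_smul]
      exact (u * u).ne_zero hcz
    have hrpos : 0 < r := lt_of_le_of_ne hr0 (Ne.symm hrne)
    set i : D := (Real.sqrt r)⁻¹ • c with hidef
    have him : i ∈ comp (1 : G) := Submodule.smul_mem _ _ hc
    have hii : i * i = -1 := by
      rw [hidef, smul_mul_smul_comm, hcc, smul_smul]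
      rw [show (Real.sqrt r)⁻¹ * (Real.sqrt r)⁻¹ * (-r) =
        -((Real.sqrt r * Real.sqrt r)⁻¹ * r) from by rw [mul_inv]; ring]
      rw [Real.mul_self_sqrt hr0, inv_mul_cancel₀ hrne, neg_smul, one_smul]
    have hiC : ∀ d ∈ comp (1 : G), i * d = d * i := by
      intro d hd; rw [hidef, smul_mul_assoc, mul_smul_comm, hcC d hd]
    -- every element of comp 1 is central in comp 1
    intro a ha b hb
    -- we show: a commutes with everything in comp 1
    suffices hcen : ∀ d ∈ comp (1 : G), a * d = d * a by
      exact hcen b hb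
    obtain ⟨⟨p, hp⟩, q, hq0, hq⟩ := hconj a ha
    rw [halg] at hp hq
    have hφa : φ a = p • (1 : D) - a := by
      rw [← hp]; abel
    have ha2 : a * a = p • a - q • (1 : D) := by
      have h1 : a * (p • (1 : D) - a) = q • (1 : D) := by rw [← hφa]; exact hq
      rw [mul_sub, mul_smul_comm, mul_one] at h1
      have := sub_eq_iff_eq_add.mp h1
      rw [this]; abel
    set b' := a * i with hb'def
    have hb'm : b' ∈ comp (1 : G) := by
      have := hmul 1 1 _ _ ha him
      rwa [one_mul] at this
    obtain ⟨⟨p', hp'⟩, q', hq0', hq'⟩ := hconj b' hb'm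
    rw [halg] at hp' hq'
    have hφb' : φ b' = p' • (1 : D) - b' := by
      rw [← hp']; abel
    have hb'2 : b' * b' = p' • b' - q' • (1 : D) := by
      have h1 : b' * (p' • (1 : D) - b') = q' • (1 : D) := by rw [← hφb']; exact hq'
      rw [mul_sub, mul_smul_comm, mul_one] at h1
      have := sub_eq_iff_eq_add.mp h1
      rw [this]; abel
    have hbb : b' * b' = -(a * a) := by
      rw [hb'def]
      calc (a * i) * (a * i) = a * ((i * a) * i) := by rw [mul_assoc, mul_assoc]
        _ = a * ((a * i) * i) := by rw [hiC a ha]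
        _ = (a * a) * (i * i) := by rw [mul_assoc, mul_assoc]
        _ = (a * a) * (-1) := by rw [hii]
        _ = -(a * a) := by rw [mul_neg_one]
    have h4 : p' • b' - q' • (1 : D) = q • (1 : D) - p • a := by
      rw [← hb'2, hbb, ha2, neg_sub]
    have h5 : p' • b' + p • a = q • (1 : D) + q' • (1 : D) :=
      sub_eq_sub_iff_add_eq_add.mp h4
    set w : D := p • (1 : D) + p' • i with hwdef
    have hwm : w ∈ comp (1 : G) :=
      Submodule.add_mem _ (Submodule.smul_mem _ _ h1mem) (Submodule.smul_mem _ _ him)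
    have haw : a * w = (q + q') • (1 : D) := by
      rw [hwdef, mul_add, mul_smul_comm, mul_one, mul_smul_comm, ← hb'def, add_smul]
      rw [add_comm (p • a)]
      exact h5
    by_cases hw0 : w = 0
    · -- degenerate: a = 0
      have hqq : q + q' = 0 := by
        rw [hw0, mul_zero] at haw
        have : (0 : ℝ) • (1 : D) = (q + q') • (1 : D) := by rw [zero_smul]; exact haw
        exact (hsmul_one_inj _ _ this).symm
      have hq00 : q = 0 := by linarith
      have hqz : a * φ a = 0 := by rw [hq, hq00, zero_smul]
      have ha0 : a = 0 := by
        by_contra han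
        obtain ⟨v, hv⟩ := hunit 1 a ha han
        have hφa0 : φ a = 0 := by
          rw [← hv] at hqz
          have := congrArg (fun x => ((v⁻¹ : Dˣ) : D) * x) hqz
          simpa [← mul_assoc, Units.inv_mul] using this
        have : a = 0 := by rw [← hinvol a, hφa0, map_zero]
        exact han this
      intro d hd; rw [ha0, zero_mul, mul_zero]
    · obtain ⟨v, hv⟩ := hunit 1 w hwm hw0
      have hwC : ∀ d ∈ comp (1 : G), w * d = d * w := by
        intro d hd
        rw [hwdef, add_mul, mul_add, smul_mul_assoc, mul_smul_comm, one_mul, mul_one,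
          smul_mul_assoc, mul_smul_comm, hiC d hd]
      have hwinvC : ∀ d ∈ comp (1 : G), ((v⁻¹ : Dˣ) : D) * d = d * ((v⁻¹ : Dˣ) : D) := by
        intro d hd
        have h : Commute ((v : D)) d := by rw [hv]; exact hwC d hd
        exact h.units_inv_left
      have hav : a = (q + q') • ((v⁻¹ : Dˣ) : D) := by
        have h := congrArg (fun x => x * ((v⁻¹ : Dˣ) : D)) haw
        rw [← hv] at h
        simpa [Units.mul_inv_cancel_right, smul_mul_assoc] using h
      intro d hd
      rw [hav, smul_mul_assoc, mul_smul_comm, hwinvC d hd]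
  · -- D_e = ℂ (commutative)
    have hcanc : ∀ (a b : D) (u : Dˣ), a * (b * (u : D)) * ((u⁻¹ : Dˣ) : D) = a * b := by
      intro a b u; rw [mul_assoc, Units.mul_inv_cancel_right]
    have hconjmem : ∀ (g : G) (v : Dˣ), (v : D) ∈ comp g →
        ∀ d ∈ comp (1 : G), (v : D) * d * ((v⁻¹ : Dˣ) : D) ∈ comp (1 : G) := by
      intro g v hv d hd
      have h1 : (v : D) * d * ((v⁻¹ : Dˣ) : D) ∈ comp (g * 1 * g⁻¹) :=
        hmul _ _ _ _ (hmul _ _ _ _ hv hd) (hinv g v hv)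
      exact hrecast _ _ _ h1 (by rw [mul_one, mul_inv_cancel])
    -- dichotomy: conjugation by a homogeneous unit is the identity or φ on comp 1
    have hdich : ∀ (g : G) (v : Dˣ), (v : D) ∈ comp g →
        (∀ d ∈ comp (1 : G), (v : D) * d * ((v⁻¹ : Dˣ) : D) = d) ∨
        (∀ d ∈ comp (1 : G), (v : D) * d * ((v⁻¹ : Dˣ) : D) = φ d) := by
      intro g v hv
      have hpt : ∀ d ∈ comp (1 : G),
          (v : D) * d * ((v⁻¹ : Dˣ) : D) = d ∨ (v : D) * d * ((v⁻¹ : Dˣ) : D) = φ d := by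
        intro d hd
        obtain ⟨⟨p, hp⟩, q, hq0, hq⟩ := hconj d hd
        rw [halg] at hp hq
        have hφd : φ d = p • (1 : D) - d := by rw [← hp]; abel
        have hd2 : d * d = p • d - q • (1 : D) := by
          have h1 : d * (p • (1 : D) - d) = q • (1 : D) := by rw [← hφd]; exact hq
          rw [mul_sub, mul_smul_comm, mul_one] at h1
          have h2 := sub_eq_iff_eq_add.mp h1
          rw [h2]; abel
        obtain ⟨σd, hσddef⟩ : ∃ x : D, x = (v : D) * d * ((v⁻¹ : Dˣ) : D) := ⟨_, rfl⟩
        rw [← hσddef]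
        have hσm : σd ∈ comp (1 : G) := by rw [hσddef]; exact hconjmem g v hv d hd
        have hσ2 : σd * σd = p • σd - q • (1 : D) := by
          rw [hσddef]
          have h1 : ((v : D) * d * ((v⁻¹ : Dˣ) : D)) * ((v : D) * d * ((v⁻¹ : Dˣ) : D)) =
              (v : D) * (d * d) * ((v⁻¹ : Dˣ) : D) := by
            simp only [mul_assoc, Units.inv_mul_cancel_left]
          rw [h1, hd2]
          simp only [mul_sub, sub_mul, mul_smul_comm, smul_mul_assoc, mul_one, Units.mul_inv]
        have hcmσ : σd * d = d * σd := hcomm σd hσm d hd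
        have hσP : σd * (p • (1 : D)) = p • σd := by rw [mul_smul_comm, mul_one]
        have hdP : d * (p • (1 : D)) = p • d := by rw [mul_smul_comm, mul_one]
        have hfactor : (σd - d) * (σd - φ d) = 0 := by
          rw [hφd]
          have e : (σd - d) * (σd - (p • (1 : D) - d)) =
              (σd * σd - σd * (p • (1 : D)) + σd * d) -
              (d * σd - d * (p • (1 : D)) + d * d) := by
            have egen : ∀ A B P : D, (A - B) * (A - (P - B)) =
                (A * A - A * P + A * B) - (B * A - B * P + B * B) := by
              intro A B P; noncomm_ring
            exact egen σd d (p • (1 : D))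
          rw [e, hσ2, hd2, hcmσ, hσP, hdP]
          abel
        rcases eq_or_ne (σd - d) 0 with h0 | h0
        · left; exact sub_eq_zero.mp h0
        · right
          have hm2 : σd - d ∈ comp (1 : G) := Submodule.sub_mem _ hσm hd
          obtain ⟨v', hv'⟩ := hunit 1 _ hm2 h0
          have h3 : σd - φ d = 0 := by
            rw [← hv'] at hfactor
            have h4 := congrArg (fun x => ((v'⁻¹ : Dˣ) : D) * x) hfactor
            simpa [← mul_assoc, Units.inv_mul] using h4
          exact sub_eq_zero.mp h3
      by_cases hid : ∀ d ∈ comp (1 : G), (v : D) * d * ((v⁻¹ : Dˣ) : D) = d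
      · left; exact hid
      · right
        push_neg at hid
        obtain ⟨d₀, hd₀m, hd₀⟩ := hid
        have hd₀φ : (v : D) * d₀ * ((v⁻¹ : Dˣ) : D) = φ d₀ := (hpt d₀ hd₀m).resolve_left hd₀
        have hφd₀ne : φ d₀ ≠ d₀ := by rw [← hd₀φ]; exact hd₀
        intro d hd
        rcases hpt d hd with h | h
        · by_cases hfix : φ d = d
          · rw [h, hfix]
          · exfalso
            have hsum : (v : D) * (d + d₀) * ((v⁻¹ : Dˣ) : D) = d + φ d₀ := by
              rw [mul_add, add_mul, h, hd₀φ]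
            rcases hpt (d + d₀) (Submodule.add_mem _ hd hd₀m) with h2 | h2
            · rw [hsum] at h2
              exact hφd₀ne (add_left_cancel h2)
            · rw [hsum, map_add] at h2
              exact hfix (add_right_cancel h2).symm
        · exact h
    -- conjugation squared is the identity
    have hσσ : ∀ (g : G) (v : Dˣ), (v : D) ∈ comp g → ∀ d ∈ comp (1 : G),
        (v : D) * ((v : D) * d * ((v⁻¹ : Dˣ) : D)) * ((v⁻¹ : Dˣ) : D) = d := by
      intro g v hv d hd
      rcases hdich g v hv with h | h
      · rw [h d hd, h d hd]
      · rw [h d hd, h _ (hgr 1 d hd), hinvol]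
    -- the unit A = X_s X_t X_t
    set A : Dˣ := Xs * (Xt * Xt) with hAdef
    have hAval : (A : D) = (Xs : D) * ((Xt : D) * (Xt : D)) := by
      rw [hAdef]; simp [Units.val_mul]
    have hAm : (A : D) ∈ comp (((s : ↥T) : G) * (((t : ↥T) : G) * t)) := by
      rw [hAval]; exact hmul _ _ _ _ hXs (hmul _ _ _ _ hXt hXt)
    have hAzW : (A : D) = (z : D) * (W : D) := by rw [hAval, ← hzW]
    have hAinvWz : ((A⁻¹ : Dˣ) : D) = ((W⁻¹ : Dˣ) : D) * ((z⁻¹ : Dˣ) : D) := by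
      have h : A⁻¹ = W⁻¹ * z⁻¹ := by
        rw [show A = z * W from by rw [hAdef, hzdef]; exact (inv_mul_cancel_right _ _).symm,
          mul_inv_rev]
      rw [h, Units.val_mul]
    -- conjugation by A agrees with conjugation by W on comp 1
    have hconjAW : ∀ x ∈ comp (1 : G),
        (A : D) * x * ((A⁻¹ : Dˣ) : D) = (W : D) * x * ((W⁻¹ : Dˣ) : D) := by
      intro x hx
      have hm : (W : D) * x * ((W⁻¹ : Dˣ) : D) ∈ comp (1 : G) := hconjmem _ W hW x hx
      have hc : (z : D) * ((W : D) * x * ((W⁻¹ : Dˣ) : D)) =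
          ((W : D) * x * ((W⁻¹ : Dˣ) : D)) * (z : D) := hcomm _ hzm _ hm
      have e1 : (A : D) * x * ((A⁻¹ : Dˣ) : D) =
          (z : D) * ((W : D) * x * ((W⁻¹ : Dˣ) : D)) * ((z⁻¹ : Dˣ) : D) := by
        rw [hAzW, hAinvWz]; simp only [mul_assoc]
      rw [e1, hc, Units.mul_inv_cancel_right]
    -- conjugation by A agrees with conjugation by Xs on comp 1
    have hconjAs : ∀ x ∈ comp (1 : G),
        (A : D) * x * ((A⁻¹ : Dˣ) : D) = (Xs : D) * x * ((Xs⁻¹ : Dˣ) : D) := by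
      intro x hx
      have h2 := hσσ _ Xt hXt x hx
      have hAinv2 : ((A⁻¹ : Dˣ) : D) =
          ((Xt⁻¹ : Dˣ) : D) * ((Xt⁻¹ : Dˣ) : D) * ((Xs⁻¹ : Dˣ) : D) := by
        have h : A⁻¹ = Xt⁻¹ * Xt⁻¹ * Xs⁻¹ := by
          rw [hAdef, mul_inv_rev, mul_inv_rev]
        rw [h, Units.val_mul, Units.val_mul]
      calc (A : D) * x * ((A⁻¹ : Dˣ) : D)
          = (Xs : D) * ((Xt : D) * ((Xt : D) * x * ((Xt⁻¹ : Dˣ) : D)) * ((Xt⁻¹ : Dˣ) : D)) *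
            ((Xs⁻¹ : Dˣ) : D) := by
            rw [hAval, hAinv2]; simp only [mul_assoc]
        _ = (Xs : D) * x * ((Xs⁻¹ : Dˣ) : D) := by rw [h2]
    have hWs : ∀ x ∈ comp (1 : G),
        (W : D) * x * ((W⁻¹ : Dˣ) : D) = (Xs : D) * x * ((Xs⁻¹ : Dˣ) : D) :=
      fun x hx => (hconjAW x hx).symm.trans (hconjAs x hx)
    have hconj_to_comm : ∀ (v : Dˣ),
        (∀ x ∈ comp (1 : G), (v : D) * x * ((v⁻¹ : Dˣ) : D) = x) →
        ∀ x ∈ comp (1 : G), (v : D) * x = x * (v : D) := by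
      intro v hv x hx
      have h := congrArg (fun y => y * (v : D)) (hv x hx)
      rw [Units.inv_mul_cancel_right] at h
      exact h
    rcases hdich _ Xs hXs with hsid | hsφ
    · -- X_s centralizes comp 1 : use the δ normalization
      have hXsC : ∀ d ∈ comp (1 : G), (Xs : D) * d = d * (Xs : D) := hconj_to_comm Xs hsid
      have hWC : ∀ d ∈ comp (1 : G), (W : D) * d = d * (W : D) :=
        hconj_to_comm W (fun x hx => (hWs x hx).trans (hsid x hx))
      have h1 := hδ s hXsC
      have h2 := hδ (s * t * t) hWC
      rw [h1, h2]
    · -- conjugation by X_s acts as φ on comp 1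
      set c : Dˣ := Xt * Xt * Xs * A⁻¹ with hcdef
      have hcval : (c : D) * (A : D) = ((Xt : D) * (Xt : D)) * (Xs : D) := by
        have h := congrArg Units.val
          (show c * A = Xt * Xt * Xs from by rw [hcdef]; exact inv_mul_cancel_right _ _)
        rw [Units.val_mul, Units.val_mul, Units.val_mul] at h
        exact h
      have hφA : φ ((A : D)) = η s • ((c : D) * (A : D)) := by
        rw [hcval, hAval, hanti, hanti, hφXs, hφXt, smul_mul_smul_comm, smul_mul_smul_comm,
          hηt2, one_mul]
      have hφzm : φ (z : D) ∈ comp (1 : G) := hgr 1 _ hzm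
      have hφA2 : φ ((A : D)) = η (s * t * t) • ((z : D) * (W : D)) := by
        have h1 : φ ((A : D)) = η (s * t * t) • ((W : D) * φ (z : D)) := by
          rw [hAval, ← hzW, hanti, hφW, smul_mul_assoc]
        have h2 : (W : D) * φ (z : D) = (z : D) * (W : D) := by
          have h3 : (W : D) * φ (z : D) * ((W⁻¹ : Dˣ) : D) = (z : D) := by
            rw [hWs _ hφzm, hsφ _ hφzm, hinvol]
          have h4 := congrArg (fun y => y * (W : D)) h3
          rw [Units.inv_mul_cancel_right] at h4
          exact h4
        rw [h1, h2]
      have hkey : η s • (c : D) = η (s * t * t) • (1 : D) := by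
        have h := hφA.symm.trans hφA2
        rw [show (z : D) * (W : D) = (A : D) from hzW.trans hAval.symm] at h
        have h2 := congrArg (fun y => y * ((A⁻¹ : Dˣ) : D)) h
        simp only [smul_mul_assoc] at h2
        rw [Units.mul_inv_cancel_right, Units.mul_inv] at h2
        exact h2
      have hcval2 : (c : D) = (η s * η (s * t * t)) • (1 : D) := by
        have h := congrArg (fun y => η s • y) hkey
        simp only [smul_smul] at h
        rw [show η s * η s = 1 from by rcases hη s with h' | h' <;> rw [h'] <;> norm_num,
          one_smul] at h
        exact h
      -- c = σ_t(β) * β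
      have h1 : (Xt : D) * ((Xt : D) * (Xs : D)) =
          ((Xt : D) * (β : D) * ((Xt⁻¹ : Dˣ) : D)) *
            ((β : D) * ((Xs : D) * ((Xt : D) * (Xt : D)))) := by
        calc (Xt : D) * ((Xt : D) * (Xs : D))
            = (Xt : D) * ((β : D) * ((Xs : D) * (Xt : D))) := by rw [hR0]
          _ = ((Xt : D) * (β : D) * ((Xt⁻¹ : Dˣ) : D)) *
              ((Xt : D) * ((Xs : D) * (Xt : D))) := by
              simp only [mul_assoc, Units.inv_mul_cancel_left]
          _ = ((Xt : D) * (β : D) * ((Xt⁻¹ : Dˣ) : D)) *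
              (((Xt : D) * (Xs : D)) * (Xt : D)) := by
              rw [← mul_assoc (Xt : D) (Xs : D) (Xt : D)]
          _ = ((Xt : D) * (β : D) * ((Xt⁻¹ : Dˣ) : D)) *
              (((β : D) * ((Xs : D) * (Xt : D))) * (Xt : D)) := by rw [hR0]
          _ = ((Xt : D) * (β : D) * ((Xt⁻¹ : Dˣ) : D)) *
              ((β : D) * (((Xs : D) * (Xt : D)) * (Xt : D))) := by
              rw [mul_assoc (β : D) ((Xs : D) * (Xt : D)) (Xt : D)]
          _ = ((Xt : D) * (β : D) * ((Xt⁻¹ : Dˣ) : D)) *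
              ((β : D) * ((Xs : D) * ((Xt : D) * (Xt : D)))) := by
              rw [mul_assoc (Xs : D) (Xt : D) (Xt : D)]
      have hc_eq : (c : D) = ((Xt : D) * (β : D) * ((Xt⁻¹ : Dˣ) : D)) * (β : D) := by
        have h2 := congrArg (fun y => y * ((A⁻¹ : Dˣ) : D)) hcval
        rw [Units.mul_inv_cancel_right] at h2
        rw [mul_assoc (Xt : D) (Xt : D) (Xs : D), h1, ← hAval] at h2
        rw [h2, hcanc]
      rcases hdich _ Xt hXt with htid | htφ
      · -- conjugation by X_t is the identity on comp 1
        have hβm' : φ (β : D) ∈ comp (1 : G) := hgr 1 _ hβm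
        have ha1 : φ ((Xt : D) * (Xs : D)) = (η s * η t) • ((Xs : D) * (Xt : D)) := by
          rw [hanti, hφXs, hφXt, smul_mul_smul_comm]
        have ha2 : φ ((β : D) * ((Xs * Xt : Dˣ) : D)) =
            (η t * η s) • (((Xt : D) * (Xs : D)) * φ (β : D)) := by
          rw [hanti, Units.val_mul, hanti, hφXs, hφXt, smul_mul_smul_comm, smul_mul_assoc]
        have ha3 : (η s * η t) • ((Xs : D) * (Xt : D)) =
            (η t * η s) • (((Xt : D) * (Xs : D)) * φ (β : D)) := by
          rw [← ha1, ← ha2, hβval]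
        rw [mul_comm (η t) (η s)] at ha3
        have h4 : (Xs : D) * (Xt : D) = ((Xt : D) * (Xs : D)) * φ (β : D) :=
          hsmul_cancel _ (mul_ne_zero hηs0 hηt0) _ _ ha3
        rw [hR0] at h4
        have h6 : ((Xs * Xt : Dˣ) : D) * φ (β : D) * (((Xs * Xt)⁻¹ : Dˣ) : D) = (β : D) := by
          have e : ((Xs * Xt : Dˣ) : D) * φ (β : D) * (((Xs * Xt)⁻¹ : Dˣ) : D) =
              (Xs : D) * ((Xt : D) * φ (β : D) * ((Xt⁻¹ : Dˣ) : D)) * ((Xs⁻¹ : Dˣ) : D) := by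
            rw [show ((Xs * Xt)⁻¹ : Dˣ) = Xt⁻¹ * Xs⁻¹ from mul_inv_rev _ _]
            simp only [Units.val_mul, mul_assoc]
          rw [e, htid _ hβm', hsφ _ hβm', hinvol]
        have hββ1 : (β : D) * (β : D) = 1 := by
          have h8 : (1 : D) = (β : D) *
              (((Xs * Xt : Dˣ) : D) * φ (β : D) * (((Xs * Xt)⁻¹ : Dˣ) : D)) := by
            calc (1 : D) = ((Xs * Xt : Dˣ) : D) * (((Xs * Xt)⁻¹ : Dˣ) : D) :=
                  (Units.mul_inv _).symm
              _ = ((Xs : D) * (Xt : D)) * (((Xs * Xt)⁻¹ : Dˣ) : D) := by rw [Units.val_mul]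
              _ = ((β : D) * ((Xs : D) * (Xt : D)) * φ (β : D)) *
                  (((Xs * Xt)⁻¹ : Dˣ) : D) := by rw [← h4]
              _ = ((β : D) * ((Xs * Xt : Dˣ) : D) * φ (β : D)) *
                  (((Xs * Xt)⁻¹ : Dˣ) : D) := by rw [← Units.val_mul]
              _ = (β : D) *
                  (((Xs * Xt : Dˣ) : D) * φ (β : D) * (((Xs * Xt)⁻¹ : Dˣ) : D)) := by
                  rw [mul_assoc ((β : D)), mul_assoc ((β : D))]
          rw [h6] at h8
          exact h8.symm
        have hc1 : (c : D) = 1 := by rw [hc_eq, htid _ hβm, hββ1]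
        have h9 : η s * η (s * t * t) = 1 := by
          apply hsmul_one_inj
          rw [one_smul, ← hcval2, hc1]
        rcases hη s with h | h <;> rcases hη (s * t * t) with h' | h' <;>
          rw [h, h'] <;> rw [h, h'] at h9 <;> linarith
      · -- conjugation by X_t is φ on comp 1
        have hβm' : φ (β : D) ∈ comp (1 : G) := hgr 1 _ hβm
        obtain ⟨_, q, hq0, hq⟩ := hconj (β : D) hβm
        rw [halg] at hq
        have hc_eq2 : (c : D) = q • (1 : D) := by
          rw [hc_eq, htφ _ hβm, hcomm _ hβm' _ hβm]
          exact hq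
        have hqval : q = η s * η (s * t * t) := by
          apply hsmul_one_inj
          rw [← hc_eq2, hcval2]
        have hq0' : q ≠ 0 := by
          intro h0; rw [h0, zero_smul] at hc_eq2; exact (Units.ne_zero c) hc_eq2
        have hqpos : 0 < q := lt_of_le_of_ne hq0 (Ne.symm hq0')
        rcases hη s with h | h <;> rcases hη (s * t * t) with h' | h' <;>
          rw [h, h'] <;> rw [h, h'] at hqval <;> linarith
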